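/- Let n ≥ 1, Q = 2n+2, R > 0, and let ū : [0, R²/4] → ℝ be defined by ū(s) = πR²/8 + (1/2)·√(s(R² − 4s)) − (R²/4)·arcsin(2√s/R). Then for every s ∈ (0, R²/4): −(2s·ū''(s) + (Q−3)·ū'(s)·(1 + ū'(s)²)) / (2·√s·(1 + ū'(s)²)^{3/2}) = (Q−2)/R. In other words, the H-mean curvature of the hypersurface t = ū(|z|²/4) in the Heisenberg group ℍⁿ is the constant (Q−2)/R. -/

import Mathlib

open Real

theorem stmt_15 (n : ℕ) (hn : 1 ≤ n) (Q R : ℝ) (hQ : Q = 2 * n + 2) (hR : 0 < R)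
    (ubar : ℝ → ℝ)
    (hubar : ∀ s ∈ Set.Icc (0 : ℝ) (R ^ 2 / 4),
      ubar s = π * R ^ 2 / 8 + (1 / 2) * Real.sqrt (s * (R ^ 2 - 4 * s)) -
        R ^ 2 / 4 * Real.arcsin (2 * Real.sqrt s / R)) :
    ∀ s ∈ Set.Ioo (0 : ℝ) (R ^ 2 / 4),
      -(2 * s * deriv (deriv ubar) s +
          (Q - 3) * deriv ubar s * (1 + deriv ubar s ^ 2)) /
        (2 * Real.sqrt s * Real.sqrt (1 + deriv ubar s ^ 2) ^ 3) = (Q - 2) / R := by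
  -- first derivative of ubar on the open interval
  have key : ∀ x ∈ Set.Ioo (0 : ℝ) (R ^ 2 / 4),
      HasDerivAt ubar (-2 * Real.sqrt x / Real.sqrt (R ^ 2 - 4 * x)) x := by
    rintro x ⟨hx0, hxR⟩
    have hbx : 0 < R ^ 2 - 4 * x := by linarith
    set a := Real.sqrt x with ha
    set b := Real.sqrt (R ^ 2 - 4 * x) with hb
    have ha0 : 0 < a := Real.sqrt_pos.mpr hx0
    have hb0 : 0 < b := Real.sqrt_pos.mpr hbx
    have ha2 : a ^ 2 = x := Real.sq_sqrt hx0.le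
    have hb2 : b ^ 2 = R ^ 2 - 4 * x := Real.sq_sqrt hbx.le
    have hprod : 0 < x * (R ^ 2 - 4 * x) := mul_pos hx0 hbx
    have hp : HasDerivAt (fun y : ℝ => y * (R ^ 2 - 4 * y)) (R ^ 2 - 8 * x) x := by
      have h := (hasDerivAt_id x).mul ((hasDerivAt_const x (R ^ 2)).sub
        ((hasDerivAt_id x).const_mul (4 : ℝ)))
      refine h.congr_deriv ?_
      simp only [id_eq, Pi.sub_apply]
      ring
    have hsq : HasDerivAt (fun y : ℝ => Real.sqrt (y * (R ^ 2 - 4 * y)))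
        ((R ^ 2 - 8 * x) / (2 * Real.sqrt (x * (R ^ 2 - 4 * x)))) x :=
      hp.sqrt hprod.ne'
    have hi : HasDerivAt (fun y : ℝ => 2 * Real.sqrt y / R) (1 / (R * a)) x := by
      have h := ((Real.hasDerivAt_sqrt hx0.ne').const_mul (2 : ℝ)).div_const R
      refine h.congr_deriv ?_
      rw [← ha]; field_simp
    have hvlt : 2 * a / R < 1 := by
      rw [div_lt_one hR]
      nlinarith [ha0]
    have hvpos : 0 < 2 * a / R := by positivity
    have harc : HasDerivAt (fun y : ℝ => Real.arcsin (2 * Real.sqrt y / R))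
        (1 / Real.sqrt (1 - (2 * a / R) ^ 2) * (1 / (R * a))) x := by
      have h := (Real.hasDerivAt_arcsin (by linarith : 2 * a / R ≠ -1)
        (ne_of_lt hvlt)).comp x hi
      exact h
    have hg : HasDerivAt (fun y : ℝ => π * R ^ 2 / 8 +
        (1 / 2) * Real.sqrt (y * (R ^ 2 - 4 * y)) -
        R ^ 2 / 4 * Real.arcsin (2 * Real.sqrt y / R))
        ((1 / 2) * ((R ^ 2 - 8 * x) / (2 * Real.sqrt (x * (R ^ 2 - 4 * x)))) -
          R ^ 2 / 4 * (1 / Real.sqrt (1 - (2 * a / R) ^ 2) * (1 / (R * a)))) x := by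
      have h := ((hasDerivAt_const x (π * R ^ 2 / 8)).add (hsq.const_mul (1 / 2))).sub
        (harc.const_mul (R ^ 2 / 4))
      rw [zero_add] at h
      exact h
    have hab : Real.sqrt (x * (R ^ 2 - 4 * x)) = a * b := Real.sqrt_mul hx0.le _
    have hsb : Real.sqrt (1 - (2 * a / R) ^ 2) = b / R := by
      have hb2' : b ^ 2 = R ^ 2 - 4 * a ^ 2 := by rw [ha2]; exact hb2
      have h1 : 1 - (2 * a / R) ^ 2 = (b / R) ^ 2 := by
        field_simp
        linear_combination -hb2'
      rw [h1, Real.sqrt_sq (by positivity)]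
    have hD : (1 / 2) * ((R ^ 2 - 8 * x) / (2 * Real.sqrt (x * (R ^ 2 - 4 * x)))) -
          R ^ 2 / 4 * (1 / Real.sqrt (1 - (2 * a / R) ^ 2) * (1 / (R * a)))
        = -2 * a / b := by
      rw [hab, hsb, ← ha2]
      field_simp
      ring
    rw [hD] at hg
    refine hg.congr_of_eventuallyEq ?_
    have hmem : Set.Ioo (0 : ℝ) (R ^ 2 / 4) ∈ nhds x :=
      (isOpen_Ioo).mem_nhds ⟨hx0, hxR⟩
    filter_upwards [hmem] with y hy
    exact hubar y (Set.mem_Icc_of_Ioo hy)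
  rintro s ⟨hs0, hsR⟩
  have hbs : 0 < R ^ 2 - 4 * s := by linarith
  set a := Real.sqrt s with ha
  set b := Real.sqrt (R ^ 2 - 4 * s) with hb
  have ha0 : 0 < a := Real.sqrt_pos.mpr hs0
  have hb0 : 0 < b := Real.sqrt_pos.mpr hbs
  have ha2 : a ^ 2 = s := Real.sq_sqrt hs0.le
  have hb2 : b ^ 2 = R ^ 2 - 4 * s := Real.sq_sqrt hbs.le
  have hd1 : deriv ubar s = -2 * a / b := ((key s ⟨hs0, hsR⟩)).deriv
  -- second derivative
  have hu1 : HasDerivAt (fun x : ℝ => -2 * Real.sqrt x / Real.sqrt (R ^ 2 - 4 * x))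
      (-R ^ 2 / (a * b ^ 3)) s := by
    have hnum : HasDerivAt (fun x : ℝ => -2 * Real.sqrt x) (-2 * (1 / (2 * a))) s :=
      (Real.hasDerivAt_sqrt hs0.ne').const_mul (-2 : ℝ)
    have hden : HasDerivAt (fun x : ℝ => Real.sqrt (R ^ 2 - 4 * x)) ((-4) / (2 * b)) s := by
      have h0 : HasDerivAt (fun x : ℝ => R ^ 2 - 4 * x) (-4 : ℝ) s := by
        have h := (hasDerivAt_const s (R ^ 2)).sub ((hasDerivAt_id s).const_mul (4 : ℝ))
        refine h.congr_deriv ?_; ring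
      exact h0.sqrt hbs.ne'
    have h := hnum.div hden hb0.ne'
    have hR2' : R ^ 2 = b ^ 2 + 4 * s := by linarith [hb2]
    refine h.congr_deriv ?_
    rw [← ha, ← hb, hR2', ← ha2]
    field_simp
    ring
  have hd2 : deriv (deriv ubar) s = -R ^ 2 / (a * b ^ 3) := by
    have hev : deriv ubar =ᶠ[nhds s]
        (fun x : ℝ => -2 * Real.sqrt x / Real.sqrt (R ^ 2 - 4 * x)) := by
      have hmem : Set.Ioo (0 : ℝ) (R ^ 2 / 4) ∈ nhds s :=
        (isOpen_Ioo).mem_nhds ⟨hs0, hsR⟩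
      filter_upwards [hmem] with y hy
      exact (key y hy).deriv
    rw [Filter.EventuallyEq.deriv_eq hev]
    exact hu1.deriv
  rw [hd1, hd2]
  have hb2' : b ^ 2 = R ^ 2 - 4 * a ^ 2 := by rw [ha2]; exact hb2
  have hone : 1 + (-2 * a / b) ^ 2 = (R / b) ^ 2 := by
    field_simp
    linear_combination hb2'
  have hsq1 : Real.sqrt (1 + (-2 * a / b) ^ 2) = R / b := by
    rw [hone, Real.sqrt_sq (by positivity)]
  rw [hsq1]
  have hs' : s = a ^ 2 := ha2.symm
  rw [hs']
  field_simp
  linear_combination (Q - 3) * hb2'
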